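/- Let n ≥ 1 and let f be drawn uniformly at random from the finite set of polynomials over 𝔽₂ in n variables of degree at most 3 with zero constant term (equivalently, uniformly random degree-3 polynomials f : {0,1}^n → {0,1} over 𝔽₂ satisfying f(0^n) = 0). Then Pr_f[ gap(f)² / 2^{2n} ≥ 1/2^{n+1} ] ≥ 1/12, i.e., Pr_f[ gap(f)² ≥ 2^{n−1} ] ≥ 1/12. (By the amplitude relation |⟨0|^⊗(n+m) C_f^(2) |0⟩^⊗(n+m)| = |gap(f)|/2^{n+m/2} of Lemma 2, this is exactly the content of Lemma 4: Pr_f[ |⟨0|^⊗(n+m) C_f^(2) |0⟩^⊗(n+m)|² ≥ 1/2^{n+m+1} ] ≥ 1/12.) -/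

import Mathlib

/-!
Lemma 4 (anticoncentration of gap(f) for random degree-3 polynomials): for a
uniformly random degree-3 polynomial f : {0,1}^n → {0,1} over 𝔽₂ with
f(0^n) = 0, Pr_f[ gap(f)²/2^{2n} ≥ 1/2^{n+1} ] ≥ 1/12.
A degree-3 polynomial with zero constant term is given by a coefficient for
each monomial ∏_{i∈S} x_i with 1 ≤ |S| ≤ 3, chosen independently and
uniformly in 𝔽₂.
-/

open scoped BigOperators

/-- The monomials of a degree-3 polynomial over `𝔽₂` in `n` variables with
zero constant term: subsets `S` of the variables with `1 ≤ |S| ≤ 3`. -/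
abbrev DegThreeMono (n : ℕ) := {S : Finset (Fin n) // 1 ≤ S.card ∧ S.card ≤ 3}

/-- The degree-3 polynomial over `𝔽₂` with zero constant term determined by
the coefficients `c` : `f_c(x) = ∑_S c S ∏_{i∈S} x_i`. -/
def polyFun {n : ℕ} (c : DegThreeMono n → ZMod 2) : (Fin n → ZMod 2) → ZMod 2 :=
  fun x => ∑ S : DegThreeMono n, c S * ∏ i ∈ S.val, x i

/-- `gap(f) = |{x : f(x) = 0}| − |{x : f(x) = 1}|`. -/
def gap {n : ℕ} (f : (Fin n → ZMod 2) → ZMod 2) : ℤ :=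
  ((Finset.univ.filter fun x : Fin n → ZMod 2 => f x = 0).card : ℤ) -
    ((Finset.univ.filter fun x : Fin n → ZMod 2 => f x = 1).card : ℤ)

def chi (v : ZMod 2) : ℤ := if v = 0 then 1 else -1

lemma chi_add (a b : ZMod 2) : chi (a + b) = chi a * chi b := by fin_cases a <;> fin_cases b <;> decide

lemma chi_sum {ι : Type*} (s : Finset ι) (g : ι → ZMod 2) :
    chi (∑ i ∈ s, g i) = ∏ i ∈ s, chi (g i) := by
  classical
  induction s using Finset.induction with
  | empty => simp [chi]
  | @insert _ _ h ih => rw [Finset.sum_insert h, Finset.prod_insert h, chi_add, ih]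

lemma gap_eq {n : ℕ} (f : (Fin n → ZMod 2) → ZMod 2) :
    gap f = ∑ x : Fin n → ZMod 2, chi (f x) := by
  classical
  have h1 : (Finset.univ.filter fun x : Fin n → ZMod 2 => ¬ f x = 0)
      = Finset.univ.filter fun x => f x = 1 := by
    apply Finset.filter_congr
    intro x _
    have : ∀ v : ZMod 2, (¬ v = 0) ↔ v = 1 := by decide
    simpa using this (f x)
  rw [gap, ← Finset.sum_filter_add_sum_filter_not Finset.univ (fun x => f x = 0) (fun x => chi (f x))]
  rw [h1]
  rw [Finset.sum_congr rfl (fun x hx => by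
    simp only [Finset.mem_filter] at hx; rw [hx.2]; rfl : ∀ x ∈ Finset.univ.filter fun x : Fin n → ZMod 2 => f x = 0, chi (f x) = 1)]
  rw [Finset.sum_congr rfl (fun x hx => by
    simp only [Finset.mem_filter] at hx; rw [hx.2]; rfl : ∀ x ∈ Finset.univ.filter fun x : Fin n → ZMod 2 => f x = 1, chi (f x) = -1)]
  simp [mul_comm, sub_eq_add_neg]

lemma chi_factor (u : ZMod 2) :
    (∑ v : ZMod 2, chi (v * u)) = if u = 0 then 2 else 0 := by
  fin_cases u <;> decide

lemma sum_c_chi {ι : Type*} [Fintype ι] [DecidableEq ι] (t : ι → ZMod 2) :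
    ∑ c : ι → ZMod 2, chi (∑ S, c S * t S)
      = if (∀ S, t S = 0) then (Fintype.card (ι → ZMod 2) : ℤ) else 0 := by
  classical
  have h1 : ∑ c : ι → ZMod 2, chi (∑ S, c S * t S)
      = ∑ c : ι → ZMod 2, ∏ S, chi (c S * t S) := by
    exact Finset.sum_congr rfl fun c _ => chi_sum _ _
  rw [h1]
  rw [← Fintype.piFinset_univ,
    ← Finset.prod_univ_sum (t := fun _ : ι => (Finset.univ : Finset (ZMod 2)))
      (f := fun S v => chi (v * t S))]
  have h2 : ∀ S : ι, (∑ v : ZMod 2, chi (v * t S)) = if t S = 0 then 2 else 0 :=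
    fun S => chi_factor (t S)
  rw [Finset.prod_congr rfl fun S _ => h2 S]
  by_cases h : ∀ S, t S = 0
  · rw [if_pos h]
    have : ∀ S : ι, (if t S = 0 then (2:ℤ) else 0) = 2 := fun S => if_pos (h S)
    rw [Finset.prod_congr rfl fun S _ => this S, Finset.prod_const,
      Fintype.card_fun]
    simp
  · rw [if_neg h]
    push_neg at h
    obtain ⟨S, hS⟩ := h
    exact Finset.prod_eq_zero (Finset.mem_univ S) (if_neg hS)

lemma cond2 {n : ℕ} (x y : Fin n → ZMod 2)
    (h : ∀ S : DegThreeMono n, (∏ i ∈ S.val, x i) + (∏ i ∈ S.val, y i) = 0) :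
    x = y := by
  funext i
  have hs := h ⟨{i}, by simp⟩
  simp only [Finset.prod_singleton] at hs
  have : ∀ a b : ZMod 2, a + b = 0 → a = b := by decide
  exact this _ _ hs

lemma zmod2_quad : ∀ xi xj yi yj zi zj : ZMod 2,
    xi*xj + yi*yj + (zi*zj + (xi+yi+zi)*(xj+yj+zj)) = 0 →
    (xi+yi)*(xj+zj) = (xj+yj)*(xi+zi) := by decide

lemma cond4 {n : ℕ} (x y z w : Fin n → ZMod 2)
    (h : ∀ S : DegThreeMono n,
      (∏ i ∈ S.val, x i) + (∏ i ∈ S.val, y i) + ((∏ i ∈ S.val, z i) + (∏ i ∈ S.val, w i)) = 0) :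
    (x = y ∧ z = w) ∨ (x = z ∧ y = w) ∨ (y = z ∧ x = w) := by
  have h1 : ∀ i, w i = x i + y i + z i := by
    intro i
    have hs := h ⟨{i}, by simp⟩
    simp only [Finset.prod_singleton] at hs
    have : ∀ a b c d : ZMod 2, a + b + (c + d) = 0 → d = a + b + c := by decide
    exact this _ _ _ _ hs
  have h2 : ∀ i j, i ≠ j →
      x i * x j + y i * y j + (z i * z j + w i * w j) = 0 := by
    intro i j hij
    have hs := h ⟨{i, j}, by
      rw [Finset.card_insert_of_notMem (by simpa using hij), Finset.card_singleton]
      omega⟩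
    simpa [Finset.prod_pair hij] using hs
  set a : Fin n → ZMod 2 := fun i => x i + y i with ha
  set b : Fin n → ZMod 2 := fun i => x i + z i with hb
  have hab : ∀ i j, a i * b j = a j * b i := by
    intro i j
    rcases eq_or_ne i j with rfl | hij
    · ring
    · have hq := h2 i j hij
      rw [h1 i, h1 j] at hq
      exact zmod2_quad _ _ _ _ _ _ hq
  have add_eq : ∀ p q : ZMod 2, p + q = 0 → p = q := by decide
  have self_add : ∀ p q : ZMod 2, p + p + q = q := by decide
  by_cases hA : ∀ i, a i = 0
  · left
    have hxy : x = y := funext fun i => add_eq _ _ (hA i)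
    refine ⟨hxy, funext fun i => ?_⟩
    rw [h1 i, ← congrFun hxy i, self_add]
  · push_neg at hA
    obtain ⟨i0, hi0⟩ := hA
    have hone : ∀ u : ZMod 2, u ≠ 0 → u = 1 := by decide
    have hai0 : a i0 = 1 := hone _ hi0
    have hbj : ∀ j, b j = a j * b i0 := by
      intro j
      have := hab i0 j
      rw [hai0, one_mul] at this
      exact this
    by_cases hbi : b i0 = 0
    · right; left
      have hxz : x = z := by
        funext j
        have : b j = 0 := by rw [hbj j, hbi, mul_zero]
        exact add_eq _ _ this
      refine ⟨hxz, funext fun i => ?_⟩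
      rw [h1 i, congrFun hxz i]
      have : ∀ p q : ZMod 2, p + q + p = q := by decide
      exact (this _ _).symm
    · right; right
      have hb1 : b i0 = 1 := hone _ hbi
      have hyz : y = z := by
        funext j
        have : a j = b j := by rw [hbj j, hb1, mul_one]
        have cancel : ∀ p q r : ZMod 2, p + q = p + r → q = r := by decide
        exact cancel (x j) _ _ this
      refine ⟨hyz, funext fun i => ?_⟩
      rw [h1 i, congrFun hyz i]
      have : ∀ p q : ZMod 2, p + q + q = p := by decide
      exact (this _ _).symm

lemma gap_sq {n : ℕ} (f : (Fin n → ZMod 2) → ZMod 2) :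
    (gap f) ^ 2 = ∑ x : Fin n → ZMod 2, ∑ y : Fin n → ZMod 2, chi (f x + f y) := by
  rw [sq, gap_eq, Finset.sum_mul_sum]
  exact Finset.sum_congr rfl fun x _ => Finset.sum_congr rfl fun y _ => (chi_add _ _).symm

lemma gap_pow4 {n : ℕ} (f : (Fin n → ZMod 2) → ZMod 2) :
    (gap f) ^ 4 = ∑ x : Fin n → ZMod 2, ∑ z : Fin n → ZMod 2, ∑ y : Fin n → ZMod 2,
      ∑ w : Fin n → ZMod 2, chi (f x + f y + (f z + f w)) := by
  have h : (gap f) ^ 4 = ((gap f) ^ 2) ^ 2 := by ring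
  rw [h, gap_sq, sq, Finset.sum_mul_sum]
  refine Finset.sum_congr rfl fun x _ => Finset.sum_congr rfl fun z _ => ?_
  rw [Finset.sum_mul_sum]
  refine Finset.sum_congr rfl fun y _ => Finset.sum_congr rfl fun w _ => ?_
  rw [← chi_add]

lemma poly_add2 {n : ℕ} (c : DegThreeMono n → ZMod 2) (x y : Fin n → ZMod 2) :
    polyFun c x + polyFun c y
      = ∑ S : DegThreeMono n, c S * ((∏ i ∈ S.val, x i) + (∏ i ∈ S.val, y i)) := by
  simp only [polyFun]
  rw [← Finset.sum_add_distrib]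
  exact Finset.sum_congr rfl fun S _ => (mul_add _ _ _).symm

lemma poly_add4 {n : ℕ} (c : DegThreeMono n → ZMod 2) (x y z w : Fin n → ZMod 2) :
    polyFun c x + polyFun c y + (polyFun c z + polyFun c w)
      = ∑ S : DegThreeMono n, c S *
          ((∏ i ∈ S.val, x i) + (∏ i ∈ S.val, y i) + ((∏ i ∈ S.val, z i) + (∏ i ∈ S.val, w i))) := by
  rw [poly_add2 c x y, poly_add2 c z w, ← Finset.sum_add_distrib]
  exact Finset.sum_congr rfl fun S _ => by ring

lemma moment2 (n : ℕ) :
    ∑ c : DegThreeMono n → ZMod 2, (gap (polyFun c)) ^ 2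
      = (Fintype.card (DegThreeMono n → ZMod 2) : ℤ) * 2 ^ n := by
  classical
  have step : ∀ c : DegThreeMono n → ZMod 2, (gap (polyFun c)) ^ 2
      = ∑ x : Fin n → ZMod 2, ∑ y : Fin n → ZMod 2,
          chi (∑ S : DegThreeMono n, c S * ((∏ i ∈ S.val, x i) + (∏ i ∈ S.val, y i))) := by
    intro c
    rw [gap_sq]
    exact Finset.sum_congr rfl fun x _ => Finset.sum_congr rfl fun y _ => by
      rw [poly_add2]
  rw [Finset.sum_congr rfl fun c _ => step c]
  rw [Finset.sum_comm]
  have : ∀ x : Fin n → ZMod 2,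
      (∑ c : DegThreeMono n → ZMod 2, ∑ y : Fin n → ZMod 2,
        chi (∑ S : DegThreeMono n, c S * ((∏ i ∈ S.val, x i) + (∏ i ∈ S.val, y i))))
      = ∑ y : Fin n → ZMod 2, ∑ c : DegThreeMono n → ZMod 2,
        chi (∑ S : DegThreeMono n, c S * ((∏ i ∈ S.val, x i) + (∏ i ∈ S.val, y i))) :=
    fun x => Finset.sum_comm
  rw [Finset.sum_congr rfl fun x _ => this x]
  have inner : ∀ x y : Fin n → ZMod 2,
      (∑ c : DegThreeMono n → ZMod 2,
        chi (∑ S : DegThreeMono n, c S * ((∏ i ∈ S.val, x i) + (∏ i ∈ S.val, y i))))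
      = if x = y then (Fintype.card (DegThreeMono n → ZMod 2) : ℤ) else 0 := by
    intro x y
    rw [sum_c_chi]
    congr 1
    simp only [eq_iff_iff]
    constructor
    · exact fun h => cond2 x y h
    · rintro rfl S
      exact CharTwo.add_self_eq_zero _
  rw [Finset.sum_congr rfl fun x _ => Finset.sum_congr rfl fun y _ => inner x y]
  simp [Finset.sum_ite_eq, Finset.card_univ, Fintype.card_fun, mul_comm]

lemma ite_bound (N : ℤ) (hN : 0 ≤ N) (P Q1 Q2 Q3 : Prop) [Decidable P] [Decidable Q1]
    [Decidable Q2] [Decidable Q3] (h : P → Q1 ∨ Q2 ∨ Q3) :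
    (if P then N else 0) ≤ (if Q1 then N else 0) + (if Q2 then N else 0) + (if Q3 then N else 0) := by
  by_cases hP : P
  · rcases h hP with hq | hq | hq <;> simp [hP, hq] <;> split_ifs <;> omega
  · simp only [if_neg hP]
    have : ∀ p : Prop, ∀ _ : Decidable p, (0:ℤ) ≤ if p then N else 0 := by
      intro p _; split_ifs <;> omega
    positivity

lemma moment4 (n : ℕ) :
    ∑ c : DegThreeMono n → ZMod 2, (gap (polyFun c)) ^ 4
      ≤ (Fintype.card (DegThreeMono n → ZMod 2) : ℤ) * (3 * 2 ^ (2 * n)) := by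
  classical
  set N : ℤ := (Fintype.card (DegThreeMono n → ZMod 2) : ℤ) with hN
  have hN0 : 0 ≤ N := by positivity
  set V := Fin n → ZMod 2 with hV
  -- rewrite the four-fold sum as a sum over the product type
  have step : ∀ c : DegThreeMono n → ZMod 2, (gap (polyFun c)) ^ 4
      = ∑ q : V × V × V × V,
          chi (∑ S : DegThreeMono n, c S *
            ((∏ i ∈ S.val, q.1 i) + (∏ i ∈ S.val, q.2.2.1 i)
              + ((∏ i ∈ S.val, q.2.1 i) + (∏ i ∈ S.val, q.2.2.2 i)))) := by
    intro c
    rw [gap_pow4]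
    rw [Fintype.sum_prod_type]
    refine Finset.sum_congr rfl fun x _ => ?_
    rw [Fintype.sum_prod_type]
    refine Finset.sum_congr rfl fun z _ => ?_
    rw [Fintype.sum_prod_type]
    refine Finset.sum_congr rfl fun y _ => Finset.sum_congr rfl fun w _ => ?_
    rw [poly_add4]
  rw [Finset.sum_congr rfl fun c _ => step c, Finset.sum_comm]
  have inner : ∀ q : V × V × V × V,
      (∑ c : DegThreeMono n → ZMod 2,
        chi (∑ S : DegThreeMono n, c S *
          ((∏ i ∈ S.val, q.1 i) + (∏ i ∈ S.val, q.2.2.1 i)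
            + ((∏ i ∈ S.val, q.2.1 i) + (∏ i ∈ S.val, q.2.2.2 i)))))
      ≤ (if q.1 = q.2.2.1 ∧ q.2.1 = q.2.2.2 then N else 0)
        + (if q.1 = q.2.1 ∧ q.2.2.1 = q.2.2.2 then N else 0)
        + (if q.2.2.1 = q.2.1 ∧ q.1 = q.2.2.2 then N else 0) := by
    intro q
    rw [sum_c_chi]
    exact ite_bound N hN0 _ _ _ _ (fun h => cond4 q.1 q.2.2.1 q.2.1 q.2.2.2 h)
  refine le_trans (Finset.sum_le_sum fun q _ => inner q) ?_
  rw [Finset.sum_add_distrib, Finset.sum_add_distrib]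
  have card_V : (Fintype.card V : ℤ) = 2 ^ n := by
    simp [hV, Fintype.card_fun]
  have d1 : ∑ q : V × V × V × V, (if q.1 = q.2.2.1 ∧ q.2.1 = q.2.2.2 then N else 0)
      = 2 ^ (2 * n) * N := by
    rw [Fintype.sum_prod_type]
    letI : DecidableEq V := fun a b => Fintype.decidablePiFintype a b
    simp [Fintype.sum_prod_type, ite_and, Finset.sum_ite_eq, Finset.sum_ite_eq',
      Finset.card_univ, ← card_V, two_mul, pow_add]
    ring
  have d2 : ∑ q : V × V × V × V, (if q.1 = q.2.1 ∧ q.2.2.1 = q.2.2.2 then N else 0)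
      = 2 ^ (2 * n) * N := by
    rw [Fintype.sum_prod_type]
    letI : DecidableEq V := fun a b => Fintype.decidablePiFintype a b
    simp [Fintype.sum_prod_type, ite_and, Finset.sum_ite_eq, Finset.sum_ite_eq',
      Finset.card_univ, ← card_V, two_mul, pow_add]
    ring
  have d3 : ∑ q : V × V × V × V, (if q.2.2.1 = q.2.1 ∧ q.1 = q.2.2.2 then N else 0)
      = 2 ^ (2 * n) * N := by
    rw [Fintype.sum_prod_type]
    letI : DecidableEq V := fun a b => Fintype.decidablePiFintype a b
    simp [Fintype.sum_prod_type, ite_and, Finset.sum_ite_eq, Finset.sum_ite_eq',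
      Finset.card_univ, ← card_V, two_mul, pow_add]
    ring
  rw [d1, d2, d3]
  ring_nf
  omega


set_option maxHeartbeats 1000000 in
/-- For a uniformly random degree-3 polynomial `f` over `𝔽₂` in `n ≥ 1`
variables with `f(0^n) = 0` (i.e. uniformly random coefficients for the
monomials of degree between 1 and 3),
`Pr_f[ gap(f)²/2^{2n} ≥ 1/2^{n+1} ] ≥ 1/12`. -/
theorem gap_anticoncentration (n : ℕ) (hn : 1 ≤ n) :
    (1 : ℚ) / 12 ≤
      ((Finset.univ.filter fun c : DegThreeMono n → ZMod 2 =>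
          (1 : ℚ) / 2 ^ (n + 1) ≤ (gap (polyFun c) : ℚ) ^ 2 / 2 ^ (2 * n)).card : ℚ) /
        (Fintype.card (DegThreeMono n → ZMod 2) : ℚ) := by
  classical
  set F := DegThreeMono n → ZMod 2 with hF
  set N : ℚ := (Fintype.card F : ℚ) with hNdef
  have hN : 0 < N := by
    rw [hNdef]
    exact_mod_cast Fintype.card_pos (α := F)
  set p : ℚ := 2 ^ n with hpdef
  have hp : 0 < p := by positivity
  set g : F → ℚ := fun c => (gap (polyFun c) : ℚ) ^ 2 with hg
  have hgnn : ∀ c, 0 ≤ g c := fun c => sq_nonneg _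
  have h2n : (2 : ℚ) ^ (2 * n) = p * p := by
    rw [hpdef, two_mul, pow_add]
  have h2n1 : (2 : ℚ) ^ (n + 1) = 2 * p := by
    rw [hpdef, pow_succ]; ring
  have hcond : ∀ c : F,
      ((1 : ℚ) / 2 ^ (n + 1) ≤ (gap (polyFun c) : ℚ) ^ 2 / 2 ^ (2 * n)) ↔ p / 2 ≤ g c := by
    intro c
    simp only [hg]
    rw [h2n, h2n1, div_le_div_iff₀ (by positivity) (by positivity)]
    constructor <;> intro h
    · nlinarith
    · nlinarith
  set A : Finset F := Finset.univ.filter fun c : F =>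
      (1 : ℚ) / 2 ^ (n + 1) ≤ (gap (polyFun c) : ℚ) ^ 2 / 2 ^ (2 * n) with hA
  set k : ℚ := (A.card : ℚ) with hk
  have hk0 : 0 ≤ k := by positivity
  -- second moment
  have hm2 : ∑ c : F, g c = N * p := by
    have := moment2 n
    have h' : ((∑ c : F, (gap (polyFun c)) ^ 2 : ℤ) : ℚ)
        = ((Fintype.card F : ℤ) * 2 ^ n : ℚ) := by exact_mod_cast congrArg (Int.cast : ℤ → ℚ) this
    push_cast at h'
    rw [hg, hNdef, hpdef]
    beta_reduce
    exact_mod_cast h'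
  -- fourth moment
  have hm4 : ∑ c : F, (g c) ^ 2 ≤ N * (3 * (p * p)) := by
    have := moment4 n
    have h' : ((∑ c : F, (gap (polyFun c)) ^ 4 : ℤ) : ℚ)
        ≤ (((Fintype.card F : ℤ) : ℚ) * (3 * 2 ^ (2 * n))) := by exact_mod_cast this
    push_cast at h'
    rw [← h2n]
    calc ∑ c : F, (g c) ^ 2 = ∑ c : F, (gap (polyFun c) : ℚ) ^ 4 := by
          refine Finset.sum_congr rfl fun c _ => ?_
          rw [hg]; ring
      _ ≤ N * (3 * 2 ^ (2 * n)) := by rw [hNdef]; exact_mod_cast h'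
  -- lower bound on the sum over A
  have hsplit : ∑ c : F, g c = ∑ c ∈ A, g c + ∑ c ∈ Finset.univ.filter
      (fun c : F => ¬ ((1 : ℚ) / 2 ^ (n + 1) ≤ (gap (polyFun c) : ℚ) ^ 2 / 2 ^ (2 * n))), g c :=
    (Finset.sum_filter_add_sum_filter_not _ _ _).symm
  have hcompl : ∑ c ∈ Finset.univ.filter
      (fun c : F => ¬ ((1 : ℚ) / 2 ^ (n + 1) ≤ (gap (polyFun c) : ℚ) ^ 2 / 2 ^ (2 * n))), g c
      ≤ N * (p / 2) := by
    have hle : ∀ c ∈ Finset.univ.filter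
        (fun c : F => ¬ ((1 : ℚ) / 2 ^ (n + 1) ≤ (gap (polyFun c) : ℚ) ^ 2 / 2 ^ (2 * n))),
        g c ≤ p / 2 := by
      intro c hc
      simp only [Finset.mem_filter] at hc
      have := hc.2
      rw [hcond c] at this
      linarith [not_le.mp this]
    calc _ ≤ ∑ _c ∈ Finset.univ.filter
          (fun c : F => ¬ ((1 : ℚ) / 2 ^ (n + 1) ≤ (gap (polyFun c) : ℚ) ^ 2 / 2 ^ (2 * n))),
          (p / 2) := Finset.sum_le_sum hle
      _ = (Finset.univ.filter
          (fun c : F => ¬ ((1 : ℚ) / 2 ^ (n + 1) ≤ (gap (polyFun c) : ℚ) ^ 2 / 2 ^ (2 * n)))).card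
          * (p / 2) := by rw [Finset.sum_const, nsmul_eq_mul]
      _ ≤ N * (p / 2) := by
          have : ((Finset.univ.filter
              (fun c : F => ¬ ((1 : ℚ) / 2 ^ (n + 1) ≤ (gap (polyFun c) : ℚ) ^ 2 / 2 ^ (2 * n)))).card : ℚ)
              ≤ N := by
            rw [hNdef]
            exact_mod_cast Finset.card_filter_le _ _
          nlinarith
  have hSA : N * (p / 2) ≤ ∑ c ∈ A, g c := by linarith [hsplit ▸ hm2]
  -- Cauchy–Schwarz
  have hCS : (∑ c ∈ A, g c) ^ 2 ≤ k * ∑ c ∈ A, (g c) ^ 2 := by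
    have := sq_sum_le_card_mul_sum_sq (s := A) (f := g)
    exact_mod_cast this
  have hsub : ∑ c ∈ A, (g c) ^ 2 ≤ ∑ c : F, (g c) ^ 2 :=
    Finset.sum_le_sum_of_subset_of_nonneg (Finset.subset_univ A)
      (fun c _ _ => sq_nonneg _)
  have hfinal : (N * (p / 2)) ^ 2 ≤ k * (N * (3 * (p * p))) := by
    calc (N * (p / 2)) ^ 2 ≤ (∑ c ∈ A, g c) ^ 2 := by
          have h0 : 0 ≤ N * (p / 2) := by positivity
          nlinarith [hSA]
      _ ≤ k * ∑ c ∈ A, (g c) ^ 2 := hCS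
      _ ≤ k * ∑ c : F, (g c) ^ 2 := by nlinarith [hsub, hk0]
      _ ≤ k * (N * (3 * (p * p))) := by nlinarith [hm4, hk0]
  have hNk : N ≤ 12 * k := by nlinarith [mul_pos hN (mul_pos hp hp), hfinal]
  rw [div_le_div_iff₀ (by norm_num) hN]
  linarith
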